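/- Let G and H be controllable simple graphs on n vertices with real adjacency matrices A and B. Then G and H are walk-equivalent (𝟙ᵀAʳ𝟙 = 𝟙ᵀBʳ𝟙 for every r ≥ 0) if and only if G and H are generalized cospectral (the characteristic polynomials of A + sJ and B + sJ coincide for every real s, where J is the all-ones matrix). -/
import Mathlib


open Matrix

/-- The walk matrix of a graph with adjacency matrix `A` on `n` vertices. -/
noncomputable def walkMatrix {n : ℕ} (A : Matrix (Fin n) (Fin n) ℝ) :
    Matrix (Fin n) (Fin n) ℝ :=
  Matrix.of fun i j => ((A ^ (j : ℕ)) *ᵥ (1 : Fin n → ℝ)) i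

/-- The all-ones matrix `J`. -/
def allOnes (n : ℕ) : Matrix (Fin n) (Fin n) ℝ := Matrix.of fun _ _ => 1

open Polynomial

set_option maxHeartbeats 1000000

section Aux

variable {m : Type*} [Fintype m] [DecidableEq m]

lemma my_charpoly_conj (P P' M : Matrix m m ℝ) (h : P * P' = 1) :
    (P * M * P').charpoly = M.charpoly := by
  have hmap : (C : ℝ →+* ℝ[X]).mapMatrix P * (C : ℝ →+* ℝ[X]).mapMatrix P' = 1 := by
    rw [← _root_.map_mul, h, _root_.map_one]
  have hm : charmatrix (P * M * P') =
      (C : ℝ →+* ℝ[X]).mapMatrix P * charmatrix M * (C : ℝ →+* ℝ[X]).mapMatrix P' := by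
    rw [charmatrix, charmatrix, _root_.map_mul, _root_.map_mul, mul_sub, sub_mul]
    congr 1
    rw [mul_assoc, (scalar_commute (X : ℝ[X]) (Commute.all X) _).eq, ← mul_assoc, hmap, one_mul]
  rw [Matrix.charpoly, Matrix.charpoly, hm, det_mul, det_mul, mul_right_comm,
    ← det_mul, hmap, det_one, one_mul]

variable {n : ℕ}

lemma herm_of_symm {M : Matrix (Fin n) (Fin n) ℝ} (h : Mᵀ = M) : M.IsHermitian := by
  rwa [Matrix.IsHermitian, conjTranspose_eq_transpose_of_trivial]

lemma my_charpoly_diagonal (v : Fin n → ℝ) :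
    (diagonal v).charpoly = ∏ i, (X - C (v i)) := by
  rw [Matrix.charpoly_of_upperTriangular _ (Matrix.blockTriangular_diagonal v)]
  simp [diagonal_apply_eq]

lemma unit_conj_pow (P P' D : Matrix (Fin n) (Fin n) ℝ) (h1 : P * P' = 1) (h2 : P' * P = 1) :
    ∀ r : ℕ, (P * D * P') ^ r = P * D ^ r * P'
  | 0 => by simp [pow_zero, h1]
  | (r + 1) => by
    rw [pow_succ, pow_succ, unit_conj_pow P P' D h1 h2 r]
    calc P * D ^ r * P' * (P * D * P') = P * D ^ r * (P' * P) * D * P' := by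
          simp only [Matrix.mul_assoc]
      _ = P * (D ^ r * D) * P' := by rw [h2]; simp only [Matrix.mul_assoc, Matrix.mul_one]

lemma spectral_facts (M : Matrix (Fin n) (Fin n) ℝ) (hM : M.IsHermitian) :
    M.charpoly = ∏ i, (X - C (hM.eigenvalues i)) ∧
      ∀ r : ℕ, (M ^ r).trace = ∑ i, hM.eigenvalues i ^ r := by
  set U : Matrix (Fin n) (Fin n) ℝ := (hM.eigenvectorUnitary : Matrix (Fin n) (Fin n) ℝ) with hU
  have h1 : U * star U = 1 := (Matrix.mem_unitaryGroup_iff).mp hM.eigenvectorUnitary.2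
  have h2 : star U * U = 1 := (Matrix.mem_unitaryGroup_iff').mp hM.eigenvectorUnitary.2
  have hdiag : diagonal ((RCLike.ofReal : ℝ → ℝ) ∘ hM.eigenvalues) = diagonal hM.eigenvalues := by
    congr 1
  have hsp : M = U * diagonal hM.eigenvalues * star U := by
    rw [← hdiag]; exact hM.spectral_theorem
  constructor
  · conv_lhs => rw [hsp]
    rw [my_charpoly_conj _ _ _ h1, my_charpoly_diagonal]
  · intro r
    conv_lhs => rw [hsp]
    rw [unit_conj_pow _ _ _ h1 h2, diagonal_pow, trace_mul_cycle, h2, one_mul,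
      trace_diagonal]
    simp

lemma sum_pow_of_prod_eq (f g : Fin n → ℝ)
    (h : ∏ i, (X - C (f i)) = ∏ i, (X - C (g i))) (r : ℕ) :
    ∑ i, f i ^ r = ∑ i, g i ^ r := by
  have hmul : ∀ v : Fin n → ℝ, ∏ i, (X - C (v i)) =
      ((Finset.univ.val.map v).map fun a => X - C a).prod := by
    intro v
    rw [Finset.prod_eq_multiset_prod, Multiset.map_map]
    rfl
  have hroots : Finset.univ.val.map f = Finset.univ.val.map g := by
    have := congrArg Polynomial.roots h
    rwa [hmul f, hmul g, roots_multiset_prod_X_sub_C, roots_multiset_prod_X_sub_C] at this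
  have hs : ∀ v : Fin n → ℝ, ∑ i, v i ^ r = ((Finset.univ.val.map v).map fun a => a ^ r).sum := by
    intro v
    rw [Finset.sum_eq_multiset_sum, Multiset.map_map]
    rfl
  rw [hs f, hs g, hroots]

noncomputable def pmat (A J : Matrix (Fin n) (Fin n) ℝ) : Matrix (Fin n) (Fin n) ℝ[X] :=
  (C : ℝ →+* ℝ[X]).mapMatrix A + (X : ℝ[X]) • (C : ℝ →+* ℝ[X]).mapMatrix J

lemma poly_expand (A J : Matrix (Fin n) (Fin n) ℝ) :
    ∀ r : ℕ, ∃ R : Matrix (Fin n) (Fin n) ℝ[X],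
      (pmat A J) ^ r = (C : ℝ →+* ℝ[X]).mapMatrix (A ^ r)
        + (X : ℝ[X]) • (C : ℝ →+* ℝ[X]).mapMatrix
            (∑ i ∈ Finset.range r, A ^ i * J * A ^ (r - 1 - i))
        + ((X : ℝ[X]) ^ 2) • R := by
  intro r
  induction r with
  | zero => exact ⟨0, by simp⟩
  | succ r ih =>
    obtain ⟨R, hR⟩ := ih
    set φ : Matrix (Fin n) (Fin n) ℝ →+* Matrix (Fin n) (Fin n) ℝ[X] := (C : ℝ →+* ℝ[X]).mapMatrix with hφ
    set Cr := ∑ i ∈ Finset.range r, A ^ i * J * A ^ (r - 1 - i) with hCr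
    refine ⟨R * φ A + φ (Cr * J) + (X : ℝ[X]) • (R * φ J), ?_⟩
    have hsum : Cr * A + A ^ r * J = ∑ i ∈ Finset.range (r + 1), A ^ i * J * A ^ (r - i) := by
      rw [Finset.sum_range_succ, hCr, Finset.sum_mul]
      congr 1
      · refine Finset.sum_congr rfl fun i hi => ?_
        rw [Finset.mem_range] at hi
        have hpow : r - 1 - i + 1 = r - i := by omega
        rw [mul_assoc, mul_assoc, ← pow_succ, hpow, ← mul_assoc]
      · simp
    rw [pow_succ, hR, pmat, ← hφ]
    rw [add_mul, add_mul, mul_add, mul_add, mul_add, ← _root_.map_mul, ← pow_succ]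
    have e1 : φ (A ^ r) * ((X : ℝ[X]) • φ J) = (X : ℝ[X]) • φ (A ^ r * J) := by
      rw [mul_smul_comm, _root_.map_mul]
    have e2 : ((X : ℝ[X]) • φ Cr) * φ A = (X : ℝ[X]) • φ (Cr * A) := by
      rw [smul_mul_assoc, _root_.map_mul]
    have e3 : ((X : ℝ[X]) • φ Cr) * ((X : ℝ[X]) • φ J) = ((X : ℝ[X]) ^ 2) • φ (Cr * J) := by
      rw [smul_mul_assoc, mul_smul_comm, smul_smul, ← sq, _root_.map_mul]
    have e4 : ((X : ℝ[X]) ^ 2 • R) * φ A = ((X : ℝ[X]) ^ 2) • (R * φ A) := smul_mul_assoc _ _ _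
    have e5 : ((X : ℝ[X]) ^ 2 • R) * ((X : ℝ[X]) • φ J) =
        ((X : ℝ[X]) ^ 2) • ((X : ℝ[X]) • (R * φ J)) := by
      rw [smul_mul_assoc, mul_smul_comm]
    rw [e1, e2, e3, e4, e5]
    have hCsum : φ (∑ i ∈ Finset.range (r + 1), A ^ i * J * A ^ (r + 1 - 1 - i))
        = φ (Cr * A) + φ (A ^ r * J) := by
      rw [← _root_.map_add, hsum]
      simp only [Nat.add_sub_cancel]
    rw [hCsum, smul_add, smul_add]
    simp only [smul_add]
    abel

lemma trace_mapC (M : Matrix (Fin n) (Fin n) ℝ) :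
    ((C : ℝ →+* ℝ[X]).mapMatrix M).trace = C M.trace := by
  simp [Matrix.trace, RingHom.mapMatrix_apply, Matrix.map_apply]

lemma coeff1_trace (A J : Matrix (Fin n) (Fin n) ℝ) (r : ℕ) :
    (((pmat A J) ^ (r + 1)).trace).coeff 1 = (r + 1 : ℝ) * (A ^ r * J).trace := by
  obtain ⟨R, hR⟩ := poly_expand A J (r + 1)
  rw [hR, Matrix.trace_add, Matrix.trace_add, Matrix.trace_smul, Matrix.trace_smul,
    trace_mapC, trace_mapC]
  have h1 : ((X : ℝ[X]) • C (∑ i ∈ Finset.range (r + 1),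
      A ^ i * J * A ^ (r + 1 - 1 - i)).trace).coeff 1
      = (r + 1 : ℝ) * (A ^ r * J).trace := by
    rw [smul_eq_mul, mul_comm, coeff_mul_X, coeff_C_zero]
    have : ∀ i ∈ Finset.range (r + 1), (A ^ i * J * A ^ (r + 1 - 1 - i)).trace
        = (A ^ r * J).trace := by
      intro i hi
      rw [Finset.mem_range] at hi
      have h : r + 1 - 1 - i + i = r := by omega
      rw [Nat.add_sub_cancel] at h ⊢
      rw [trace_mul_cycle, ← pow_add, h]
    rw [Matrix.trace_sum, Finset.sum_congr rfl this, Finset.sum_const, Finset.card_range,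
      nsmul_eq_mul]
    push_cast
    ring
  have h2 : (((X : ℝ[X]) ^ 2) • R.trace).coeff 1 = 0 := by
    rw [smul_eq_mul, mul_comm, coeff_mul_X_pow']
    simp
  rw [coeff_add, coeff_add, coeff_C, h1, h2]
  simp

lemma pmat_eval (A J : Matrix (Fin n) (Fin n) ℝ) (s : ℝ) :
    (pmat A J).map (eval s) = A + s • J := by
  ext i j
  simp only [pmat, RingHom.mapMatrix_apply, Matrix.map_apply, Matrix.add_apply,
    Matrix.smul_apply, smul_eq_mul, Pi.smul_apply, eval_add, eval_mul, eval_C, eval_X]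

lemma map_pow_eval (M : Matrix (Fin n) (Fin n) ℝ[X]) (k : ℕ) (s : ℝ) :
    (M ^ k).map (eval s) = (M.map (eval s)) ^ k := by
  have hc : ∀ N : Matrix (Fin n) (Fin n) ℝ[X],
      N.map (eval s) = (evalRingHom s).mapMatrix N := by
    intro N; rw [RingHom.mapMatrix_apply, coe_evalRingHom]
  rw [hc, hc, _root_.map_pow]

lemma trace_eval (M : Matrix (Fin n) (Fin n) ℝ[X]) (s : ℝ) :
    eval s M.trace = (M.map (eval s)).trace := by
  simp [Matrix.trace, eval_finset_sum, Matrix.map_apply]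

lemma trace_mul_allOnes (M : Matrix (Fin n) (Fin n) ℝ) :
    (M * allOnes n).trace = (1 : Fin n → ℝ) ⬝ᵥ (M *ᵥ (1 : Fin n → ℝ)) := by
  simp [Matrix.trace, Matrix.mul_apply, allOnes, dotProduct, Matrix.mulVec, Matrix.diag]


lemma backward_main (A B : Matrix (Fin n) (Fin n) ℝ) (hA : Aᵀ = A) (hB : Bᵀ = B)
    (hs : ∀ s : ℝ, (A + s • allOnes n).charpoly = (B + s • allOnes n).charpoly) :
    ∀ r : ℕ, (1 : Fin n → ℝ) ⬝ᵥ (A ^ r *ᵥ (1 : Fin n → ℝ))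
      = (1 : Fin n → ℝ) ⬝ᵥ (B ^ r *ᵥ (1 : Fin n → ℝ)) := by
  have hJ : (allOnes n)ᵀ = allOnes n := rfl
  have htr : ∀ (s : ℝ) (k : ℕ),
      ((A + s • allOnes n) ^ k).trace = ((B + s • allOnes n) ^ k).trace := by
    intro s k
    have hMA : (A + s • allOnes n).IsHermitian :=
      herm_of_symm (by rw [transpose_add, transpose_smul, hA, hJ])
    have hMB : (B + s • allOnes n).IsHermitian :=
      herm_of_symm (by rw [transpose_add, transpose_smul, hB, hJ])
    rw [(spectral_facts _ hMA).2 k, (spectral_facts _ hMB).2 k]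
    apply sum_pow_of_prod_eq
    rw [← (spectral_facts _ hMA).1, ← (spectral_facts _ hMB).1]
    exact hs s
  have hptr : ∀ k : ℕ,
      ((pmat A (allOnes n)) ^ k).trace = ((pmat B (allOnes n)) ^ k).trace := by
    intro k
    apply Polynomial.funext
    intro s
    rw [trace_eval, trace_eval, map_pow_eval, map_pow_eval, pmat_eval, pmat_eval]
    exact htr s k
  intro r
  have h := congrArg (fun p => p.coeff 1) (hptr (r + 1))
  simp only [coeff1_trace] at h
  rw [trace_mul_allOnes, trace_mul_allOnes] at h
  have hne : (r + 1 : ℝ) ≠ 0 := by positivity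
  exact mul_left_cancel₀ hne h

lemma dot_pow_symm (A : Matrix (Fin n) (Fin n) ℝ) (hA : Aᵀ = A) (i j : ℕ) :
    (A ^ i *ᵥ (1 : Fin n → ℝ)) ⬝ᵥ (A ^ j *ᵥ (1 : Fin n → ℝ))
      = (1 : Fin n → ℝ) ⬝ᵥ (A ^ (i + j) *ᵥ (1 : Fin n → ℝ)) := by
  have h1 : A ^ i *ᵥ (1 : Fin n → ℝ) = (1 : Fin n → ℝ) ᵥ* A ^ i := by
    rw [← Matrix.vecMul_transpose, Matrix.transpose_pow, hA]
  rw [h1, ← Matrix.dotProduct_mulVec, Matrix.mulVec_mulVec, ← pow_add]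

lemma sandwich_apply (W M W' : Matrix (Fin n) (Fin n) ℝ) (i j : Fin n) :
    (Wᵀ * M * W') i j = (fun k => W k i) ⬝ᵥ (M *ᵥ fun k => W' k j) := by
  simp only [Matrix.mul_apply, Matrix.transpose_apply, dotProduct, Matrix.mulVec,
    Finset.sum_mul, Finset.mul_sum, dotProduct]
  rw [Finset.sum_comm]
  refine Finset.sum_congr rfl fun k _ => Finset.sum_congr rfl fun l _ => by ring

lemma walkMatrix_col (A : Matrix (Fin n) (Fin n) ℝ) (j : Fin n) :
    (fun k => walkMatrix A k j) = A ^ (j : ℕ) *ᵥ (1 : Fin n → ℝ) := rfl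


lemma forward_main (A B : Matrix (Fin n) (Fin n) ℝ) (hA : Aᵀ = A) (hB : Bᵀ = B)
    (hWA : IsUnit (walkMatrix A)) (hWB : IsUnit (walkMatrix B))
    (h : ∀ r : ℕ, (1 : Fin n → ℝ) ⬝ᵥ (A ^ r *ᵥ (1 : Fin n → ℝ))
      = (1 : Fin n → ℝ) ⬝ᵥ (B ^ r *ᵥ (1 : Fin n → ℝ)))
    (s : ℝ) : (A + s • allOnes n).charpoly = (B + s • allOnes n).charpoly := by
  rcases Nat.eq_zero_or_pos n with hn | hn
  · subst hn
    rw [Subsingleton.elim (A + s • allOnes 0) (B + s • allOnes 0)]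
  haveI : NeZero n := ⟨by omega⟩
  letI : Invertible (walkMatrix A) := Classical.choice hWA.nonempty_invertible
  letI : Invertible (walkMatrix B) := Classical.choice hWB.nonempty_invertible
  set W := walkMatrix A with hW
  set V := walkMatrix B with hV
  -- key sandwich identities
  have hWW : Wᵀ * W = Vᵀ * V := by
    ext i j
    rw [show Wᵀ * W = Wᵀ * 1 * W by rw [Matrix.mul_one],
        show Vᵀ * V = Vᵀ * 1 * V by rw [Matrix.mul_one],
        sandwich_apply, sandwich_apply, hW, hV, walkMatrix_col, walkMatrix_col,
        walkMatrix_col, walkMatrix_col, Matrix.one_mulVec, Matrix.one_mulVec,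
        dot_pow_symm A hA, dot_pow_symm B hB]
    exact h _
  have hWAW : Wᵀ * A * W = Vᵀ * B * V := by
    ext i j
    rw [sandwich_apply, sandwich_apply, hW, hV, walkMatrix_col, walkMatrix_col,
      walkMatrix_col, walkMatrix_col]
    have e : ∀ (M : Matrix (Fin n) (Fin n) ℝ) (k : ℕ), M *ᵥ (M ^ k *ᵥ (1 : Fin n → ℝ))
        = M ^ (k + 1) *ᵥ (1 : Fin n → ℝ) := by
      intro M k; rw [Matrix.mulVec_mulVec, pow_succ']
    rw [e, e, dot_pow_symm A hA, dot_pow_symm B hB]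
    exact h _
  -- the conjugating matrix
  have hB' : B = (V * ⅟W) * A * (W * ⅟V) := by
    have h1 : Vᵀ * ((V * ⅟W) * A * (W * ⅟V)) = Vᵀ * B := by
      have e1 : Vᵀ * ((V * ⅟W) * A * (W * ⅟V)) = ((Vᵀ * V) * ⅟W) * A * (W * ⅟V) := by
        simp only [Matrix.mul_assoc]
      rw [e1, ← hWW, Matrix.mul_assoc Wᵀ W (⅟W), mul_invOf_self, Matrix.mul_one,
        ← Matrix.mul_assoc (Wᵀ * A) W (⅟V), hWAW]
      simp only [Matrix.mul_assoc, mul_invOf_self, Matrix.mul_one]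
    calc B = ⅟(Vᵀ) * (Vᵀ * B) := (invOf_mul_cancel_left _ _).symm
      _ = ⅟(Vᵀ) * (Vᵀ * ((V * ⅟W) * A * (W * ⅟V))) := by rw [h1]
      _ = (V * ⅟W) * A * (W * ⅟V) := invOf_mul_cancel_left _ _
  set Q := V * ⅟W with hQ
  set Q' := W * ⅟V with hQ'
  have hQQ' : Q * Q' = 1 := by
    rw [hQ, hQ', Matrix.mul_assoc, ← Matrix.mul_assoc (⅟W) W (⅟V), invOf_mul_self,
      Matrix.one_mul, mul_invOf_self]
  -- J facts
  have hWone : W *ᵥ Pi.single (0 : Fin n) 1 = 1 := by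
    ext i
    rw [Matrix.mulVec_single]
    simp [hW, walkMatrix]
  have hQ1 : Q *ᵥ (1 : Fin n → ℝ) = 1 := by
    have : ⅟W *ᵥ (1 : Fin n → ℝ) = Pi.single (0 : Fin n) 1 := by
      rw [← hWone, Matrix.mulVec_mulVec, invOf_mul_self, Matrix.one_mulVec]
    rw [hQ, ← Matrix.mulVec_mulVec, this]
    ext i
    rw [Matrix.mulVec_single]
    simp [hV, walkMatrix]
  have honeW : (1 : Fin n → ℝ) ᵥ* W = (1 : Fin n → ℝ) ᵥ* V := by
    ext j
    have : ∀ (M : Matrix (Fin n) (Fin n) ℝ), ((1 : Fin n → ℝ) ᵥ* walkMatrix M) j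
        = (1 : Fin n → ℝ) ⬝ᵥ (M ^ (j : ℕ) *ᵥ (1 : Fin n → ℝ)) := by
      intro M
      simp [Matrix.vecMul, walkMatrix, dotProduct, Matrix.mulVec]
    rw [hW, hV, this, this]
    exact h _
  have honeQ' : (1 : Fin n → ℝ) ᵥ* Q' = 1 := by
    rw [hQ', ← Matrix.vecMul_vecMul, honeW, Matrix.vecMul_vecMul, mul_invOf_self,
      Matrix.vecMul_one]
  have hQJ : Q * allOnes n = allOnes n := by
    ext i j
    have := congrFun hQ1 i
    simpa [Matrix.mul_apply, allOnes, Matrix.mulVec, dotProduct] using this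
  have hJQ' : allOnes n * Q' = allOnes n := by
    ext i j
    have := congrFun honeQ' j
    simpa [Matrix.mul_apply, allOnes, Matrix.vecMul, dotProduct] using this
  have key : Q * (A + s • allOnes n) * Q' = B + s • allOnes n := by
    rw [Matrix.mul_add, Matrix.add_mul, Matrix.mul_smul, Matrix.smul_mul, hQJ, hJQ', ← hB']
  rw [← key, my_charpoly_conj _ _ _ hQQ']

end Aux

/-- Two controllable graphs are walk-equivalent iff they are generalized cospectral. -/
theorem controllable_walkEquiv_iff_generalizedCospectral {n : ℕ}
    (G H : SimpleGraph (Fin n)) [DecidableRel G.Adj] [DecidableRel H.Adj]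
    (hG : IsUnit (walkMatrix (G.adjMatrix ℝ)))
    (hH : IsUnit (walkMatrix (H.adjMatrix ℝ))) :
    (∀ r : ℕ, (1 : Fin n → ℝ) ⬝ᵥ (((G.adjMatrix ℝ) ^ r) *ᵥ (1 : Fin n → ℝ)) =
        (1 : Fin n → ℝ) ⬝ᵥ (((H.adjMatrix ℝ) ^ r) *ᵥ (1 : Fin n → ℝ))) ↔
    (∀ s : ℝ, (G.adjMatrix ℝ + s • allOnes n).charpoly =
        (H.adjMatrix ℝ + s • allOnes n).charpoly) := by
  constructor
  · intro h s
    exact forward_main _ _ (G.transpose_adjMatrix) (H.transpose_adjMatrix) hG hH h s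
  · intro h r
    exact backward_main _ _ (G.transpose_adjMatrix) (H.transpose_adjMatrix) h r
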